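/- Fix ε > 0 and 0 < δ < π/2, and take γ = π/2 and the fiducial vector η^{(ε,δ)}, so that E_{η^{(ε,δ)};π/2}(α) = (1/(δ e_{2ε}(δ,1))) · ω_{2ε}(α/δ)/cos α for |α| < δ (extended 2π-periodically, zero elsewhere on the period). Then the convolution of E_{η^{(ε,δ)};π/2} with the sawtooth function a coincides with a on the middle of the period: (E_{η^{(ε,δ)};π/2} ∗ a)(α) = α for every α ∈ [δ, 2π−δ]. -/

import Mathlib

open Real MeasureTheory

/-- The smooth bump profile `ω_ε(x) = exp(−ε/(1−x²))` for `|x| < 1`, `0` otherwise. -/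
noncomputable def ω (ε x : ℝ) : ℝ :=
  if |x| < 1 then Real.exp (-ε / (1 - x ^ 2)) else 0

/-- Reduction of `α` to the period interval `[−π, π)`. -/
noncomputable def toPi (α : ℝ) : ℝ := α - 2 * π * (⌊(α + π) / (2 * π)⌋ : ℝ)

/-- The 2π-periodic sawtooth (angle) function `a(α) = α` for `α ∈ [0, 2π)`. -/
noncomputable def saw (α : ℝ) : ℝ := α - 2 * π * (⌊α / (2 * π)⌋ : ℝ)

/-- `e_ε(δ,1) = ∫_{−1}^{1} ω_ε(x)/cos(δx) dx`. -/
noncomputable def eDel (ε δ : ℝ) : ℝ := ∫ x in (-1:ℝ)..1, ω ε x / Real.cos (δ * x)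

/-- The 2π-periodic function
`E_{η^{(ε,δ)};π/2}(α) = (1/(δ e_{2ε}(δ,1))) ω_{2ε}(α/δ)/cos α` for `|α| < δ`
(mod 2π), and `0` elsewhere on the period. -/
noncomputable def Ebump (ε δ : ℝ) (α : ℝ) : ℝ :=
  1 / (δ * eDel (2 * ε) δ) * ω (2 * ε) (toPi α / δ) / Real.cos α

lemma omega_meas (ε : ℝ) : Measurable (ω ε) := by
  unfold ω
  exact Measurable.ite (measurableSet_lt (by measurability) measurable_const)
    (by measurability) measurable_const

lemma omega_nonneg (ε x : ℝ) : 0 ≤ ω ε x := by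
  unfold ω; split
  · positivity
  · exact le_rfl

lemma omega_le_one (ε x : ℝ) (hε : 0 ≤ ε) : ω ε x ≤ 1 := by
  unfold ω; split
  · rename_i h
    have h2 : 0 < 1 - x ^ 2 := by
      have := abs_lt.1 h
      nlinarith [this.1, this.2]
    have : -ε / (1 - x ^ 2) ≤ 0 := by
      apply div_nonpos_of_nonpos_of_nonneg <;> linarith
    calc Real.exp (-ε / (1 - x ^ 2)) ≤ Real.exp 0 := Real.exp_le_exp.2 this
      _ = 1 := Real.exp_zero
  · exact zero_le_one

lemma omega_even (ε x : ℝ) : ω ε (-x) = ω ε x := by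
  simp [ω, abs_neg, neg_sq]

lemma omega_eq_zero (ε x : ℝ) (h : 1 ≤ |x|) : ω ε x = 0 :=
  if_neg (not_lt.2 h)

lemma omega_pos (ε x : ℝ) (h : |x| < 1) : 0 < ω ε x := by
  rw [ω, if_pos h]; exact Real.exp_pos _

lemma toPi_eq_self {x : ℝ} (h1 : -π ≤ x) (h2 : x < π) : toPi x = x := by
  have hπ := Real.pi_pos
  have : ⌊(x + π) / (2 * π)⌋ = 0 := by
    rw [Int.floor_eq_iff]
    constructor
    · push_cast; exact div_nonneg (by linarith) (by positivity)
    · push_cast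
      rw [div_lt_iff₀ (by positivity)]
      linarith
  simp [toPi, this]

lemma toPi_eq_sub {x : ℝ} (h1 : π ≤ x) (h2 : x < 3 * π) : toPi x = x - 2 * π := by
  have hπ := Real.pi_pos
  have : ⌊(x + π) / (2 * π)⌋ = 1 := by
    rw [Int.floor_eq_iff]
    constructor
    · push_cast
      rw [le_div_iff₀ (by positivity)]
      linarith
    · push_cast
      rw [div_lt_iff₀ (by positivity)]
      linarith
  rw [toPi, this]; push_cast; ring

lemma toPi_eq_add {x : ℝ} (h1 : -(3 * π) ≤ x) (h2 : x < -π) : toPi x = x + 2 * π := by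
  have hπ := Real.pi_pos
  have : ⌊(x + π) / (2 * π)⌋ = -1 := by
    rw [Int.floor_eq_iff]
    constructor
    · push_cast
      rw [le_div_iff₀ (by positivity)]
      linarith
    · push_cast
      rw [div_lt_iff₀ (by positivity)]
      linarith
  rw [toPi, this]; push_cast; ring

lemma saw_eq_self {q : ℝ} (h1 : 0 ≤ q) (h2 : q < 2 * π) : saw q = q := by
  have hπ := Real.pi_pos
  have : ⌊q / (2 * π)⌋ = 0 := by
    rw [Int.floor_eq_iff]
    constructor
    · push_cast; exact div_nonneg (by linarith) (by positivity)
    · push_cast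
      rw [div_lt_iff₀ (by positivity)]
      linarith
  simp [saw, this]

lemma saw_two_pi : saw (2 * π) = 0 := by
  have hπ := Real.pi_pos
  have : (2 * π) / (2 * π) = 1 := div_self (by positivity)
  simp [saw, this]

lemma II_of_bdd {f : ℝ → ℝ} {a b M : ℝ} (hm : Measurable f)
    (h : ∀ x ∈ Set.uIoc a b, |f x| ≤ M) : IntervalIntegrable f volume a b := by
  rw [intervalIntegrable_iff]
  have hconst : IntegrableOn (fun _ => M) (Set.uIoc a b) volume :=
    integrableOn_const measure_Ioc_lt_top.ne
  apply MeasureTheory.Integrable.mono' hconst hm.aestronglyMeasurable.restrict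
  refine (ae_restrict_iff' measurableSet_uIoc).2 (Filter.Eventually.of_forall ?_)
  intro x hx
  simpa [Real.norm_eq_abs] using h x hx

/-- For `ε > 0`, `0 < δ < π/2`, `γ = π/2` and the fiducial vector `η^{(ε,δ)}`, the
periodic convolution of `E_{η^{(ε,δ)};π/2}` with the sawtooth function `a` coincides
with `a` on the middle of the period: `(E ∗ a)(α) = α` for every `α ∈ [δ, 2π−δ]`. -/
theorem convolution_equals_angle_in_middle (ε δ : ℝ) (hε : 0 < ε)
    (hδ0 : 0 < δ) (hδπ : δ < π / 2) :
    ∀ α ∈ Set.Icc δ (2 * π - δ),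
      (∫ q in (0:ℝ)..(2 * π), Ebump ε δ (α - q) * saw q) = α := by
  have hπ := Real.pi_pos
  have hδπ' : δ < π := by linarith
  have hcosδ : 0 < Real.cos δ := Real.cos_pos_of_mem_Ioo ⟨by linarith, hδπ⟩
  have hp_meas : Measurable (fun y => ω (2 * ε) y / Real.cos (δ * y)) :=
    (omega_meas _).div (Real.measurable_cos.comp (measurable_const.mul measurable_id))
  have hcos_of : ∀ y : ℝ, |y| ≤ 1 → Real.cos δ ≤ Real.cos (δ * y) := by
    intro y hy
    rw [← Real.cos_abs (δ * y)]
    apply Real.cos_le_cos_of_nonneg_of_le_pi (abs_nonneg _) hδπ'.le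
    rw [abs_mul, abs_of_pos hδ0]
    nlinarith [abs_nonneg y]
  have he : 0 < eDel (2 * ε) δ := by
    unfold eDel
    apply intervalIntegral.intervalIntegral_pos_of_pos_on
    · apply II_of_bdd (M := 1 / Real.cos δ) hp_meas
      intro y hy
      rw [Set.uIoc_of_le (by norm_num : (-1:ℝ) ≤ 1)] at hy
      have hy' : |y| ≤ 1 := abs_le.2 ⟨hy.1.le, hy.2⟩
      have h1 := hcos_of y hy'
      have h2 : 0 < Real.cos (δ * y) := lt_of_lt_of_le hcosδ h1
      rw [abs_of_nonneg (div_nonneg (omega_nonneg _ _) h2.le)]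
      exact div_le_div₀ zero_le_one (omega_le_one _ _ (by linarith)) hcosδ h1
    · intro y hy
      exact div_pos (omega_pos _ _ (abs_lt.2 ⟨hy.1, hy.2⟩))
        (lt_of_lt_of_le hcosδ (hcos_of y (abs_le.2 ⟨hy.1.le, hy.2.le⟩)))
    · norm_num
  intro α hα
  obtain ⟨hαl, hαr⟩ := hα
  set c : ℝ := 1 / (δ * eDel (2 * ε) δ) with hc
  set H : ℝ → ℝ := fun x => c * ω (2 * ε) (x / δ) / Real.cos x with hH
  have hHmeas : Measurable H :=
    (measurable_const.mul ((omega_meas _).comp (measurable_id.div_const δ))).div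
      Real.measurable_cos
  have hcosx : ∀ x : ℝ, |x| ≤ δ → Real.cos δ ≤ Real.cos x := by
    intro x hx
    rw [← Real.cos_abs x]
    exact Real.cos_le_cos_of_nonneg_of_le_pi (abs_nonneg _) hδπ'.le hx
  set B : ℝ := |c| * (1 / Real.cos δ) with hB
  have hB0 : 0 ≤ B := mul_nonneg (abs_nonneg c) (one_div_nonneg.2 hcosδ.le)
  have hHb : ∀ x : ℝ, |x| ≤ δ → |H x| ≤ B := by
    intro x hx
    have h1 := hcosx x hx
    have h2 : 0 < Real.cos x := lt_of_lt_of_le hcosδ h1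
    have h3 : H x = c * (ω (2 * ε) (x / δ) / Real.cos x) := mul_div_assoc _ _ _
    rw [h3, abs_mul, abs_of_nonneg (div_nonneg (omega_nonneg _ _) h2.le), hB]
    exact mul_le_mul_of_nonneg_left
      (div_le_div₀ zero_le_one (omega_le_one _ _ (by linarith)) hcosδ h1) (abs_nonneg c)
  have hIH : IntervalIntegrable H volume (-δ) δ := by
    apply II_of_bdd (M := B) hHmeas
    intro x hx
    rw [Set.uIoc_of_le (by linarith)] at hx
    exact hHb x (abs_le.2 ⟨hx.1.le, hx.2⟩)
  have hIxH : IntervalIntegrable (fun x => x * H x) volume (-δ) δ := by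
    apply II_of_bdd (M := δ * B) (measurable_id.mul hHmeas)
    intro x hx
    rw [Set.uIoc_of_le (by linarith)] at hx
    have hx' : |x| ≤ δ := abs_le.2 ⟨hx.1.le, hx.2⟩
    show |x * H x| ≤ δ * B
    rw [abs_mul]
    exact mul_le_mul hx' (hHb x hx') (abs_nonneg _) hδ0.le
  -- pointwise identities
  have key1 : Set.EqOn (fun q => Ebump ε δ (α - q) * saw q) (fun _ => (0:ℝ))
      (Set.uIcc 0 (α - δ)) := by
    intro q hq
    rw [Set.uIcc_of_le (by linarith)] at hq
    have hx1 : δ ≤ α - q := by linarith [hq.2]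
    have hx2 : α - q ≤ 2 * π - δ := by linarith [hq.1]
    have hω : ω (2 * ε) (toPi (α - q) / δ) = 0 := by
      apply omega_eq_zero
      rw [abs_div, abs_of_pos hδ0, le_div_iff₀ hδ0, one_mul]
      rcases lt_or_ge (α - q) π with h | h
      · rw [toPi_eq_self (by linarith) h, abs_of_pos (by linarith)]
        linarith
      · rw [toPi_eq_sub h (by linarith), abs_of_nonpos (by linarith)]
        linarith
    show Ebump ε δ (α - q) * saw q = 0
    simp [Ebump, hω]
  have key3 : Set.EqOn (fun q => Ebump ε δ (α - q) * saw q) (fun _ => (0:ℝ))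
      (Set.uIcc (α + δ) (2 * π)) := by
    intro q hq
    rw [Set.uIcc_of_le (by linarith)] at hq
    have hx1 : α - q ≤ -δ := by linarith [hq.1]
    have hx2 : δ - 2 * π ≤ α - q := by linarith [hq.2]
    have hω : ω (2 * ε) (toPi (α - q) / δ) = 0 := by
      apply omega_eq_zero
      rw [abs_div, abs_of_pos hδ0, le_div_iff₀ hδ0, one_mul]
      rcases lt_or_ge (α - q) (-π) with h | h
      · rw [toPi_eq_add (by linarith) h, abs_of_pos (by linarith)]
        linarith
      · rw [toPi_eq_self h (by linarith), abs_of_nonpos (by linarith)]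
        linarith
    show Ebump ε δ (α - q) * saw q = 0
    simp [Ebump, hω]
  have key2 : Set.EqOn (fun q => Ebump ε δ (α - q) * saw q) (fun q => H (α - q) * q)
      (Set.uIcc (α - δ) (α + δ)) := by
    intro q hq
    rw [Set.uIcc_of_le (by linarith)] at hq
    have hq1 := hq.1
    have hq2 := hq.2
    have hd1 : -δ ≤ α - q := by linarith
    have hd2 : α - q ≤ δ := by linarith
    have htp : toPi (α - q) = α - q := toPi_eq_self (by linarith) (by linarith)
    show Ebump ε δ (α - q) * saw q = H (α - q) * q
    rcases lt_or_ge q (2 * π) with h | h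
    · rw [saw_eq_self (by linarith) h]
      rw [Ebump, htp, hH, hc]
    · have hq2π : q = 2 * π := le_antisymm (by linarith) h
      have hαq : α - q = -δ := by
        have h5 : α - q ≤ -δ := by rw [hq2π]; linarith
        linarith
      have hHz : H (α - q) = 0 := by
        rw [hH]
        simp only
        rw [hαq, neg_div, div_self hδ0.ne', omega_eq_zero _ _ (by norm_num)]
        ring
      rw [hq2π, saw_two_pi, mul_zero, ← hq2π, hHz, zero_mul]
  -- integrability of the three pieces
  have hI1 : IntervalIntegrable (fun q => Ebump ε δ (α - q) * saw q) volume 0 (α - δ) := by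
    exact (intervalIntegrable_const (c := (0:ℝ))).congr
      (fun q hq => (key1 (Set.uIoc_subset_uIcc hq)).symm)
  have hI3 : IntervalIntegrable (fun q => Ebump ε δ (α - q) * saw q) volume (α + δ) (2 * π) := by
    exact (intervalIntegrable_const (c := (0:ℝ))).congr
      (fun q hq => (key3 (Set.uIoc_subset_uIcc hq)).symm)
  have hIG : IntervalIntegrable (fun q => H (α - q) * q) volume (α - δ) (α + δ) := by
    apply II_of_bdd (M := B * (2 * π))
      ((hHmeas.comp (measurable_const.sub measurable_id)).mul measurable_id)
    intro q hq
    rw [Set.uIoc_of_le (by linarith)] at hq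
    have h1 : |α - q| ≤ δ := abs_le.2 ⟨by linarith [hq.2], by linarith [hq.1]⟩
    have h2 : |q| ≤ 2 * π := abs_le.2 ⟨by linarith [hq.1], by linarith [hq.2]⟩
    show |H (α - q) * q| ≤ B * (2 * π)
    rw [abs_mul]
    exact mul_le_mul (hHb _ h1) h2 (abs_nonneg _) hB0
  have hI2 : IntervalIntegrable (fun q => Ebump ε δ (α - q) * saw q) volume (α - δ) (α + δ) := by
    exact hIG.congr (fun q hq => (key2 (Set.uIoc_subset_uIcc hq)).symm)
  -- split the integral
  have hsplit : (∫ q in (0:ℝ)..(2 * π), Ebump ε δ (α - q) * saw q)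
      = (∫ q in (0:ℝ)..(α - δ), Ebump ε δ (α - q) * saw q)
        + ((∫ q in (α - δ)..(α + δ), Ebump ε δ (α - q) * saw q)
        + (∫ q in (α + δ)..(2 * π), Ebump ε δ (α - q) * saw q)) := by
    rw [intervalIntegral.integral_add_adjacent_intervals hI2 hI3,
        intervalIntegral.integral_add_adjacent_intervals hI1 (hI2.trans hI3)]
  rw [hsplit, intervalIntegral.integral_congr key1, intervalIntegral.integral_congr key3,
      intervalIntegral.integral_congr key2]
  simp only [intervalIntegral.integral_const, smul_zero, zero_add, add_zero]
  -- change of variables q ↦ α − x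
  have step1 : (∫ q in (α - δ)..(α + δ), H (α - q) * q)
      = ∫ x in (-δ)..δ, H x * (α - x) := by
    have h1 : (∫ q in (α - δ)..(α + δ), H (α - q) * q)
        = ∫ q in (α - δ)..(α + δ), (fun x => H x * (α - x)) (α - q) := by
      apply intervalIntegral.integral_congr
      intro q _
      simp only
      have : α - (α - q) = q := by ring
      rw [this]
    rw [h1, intervalIntegral.integral_comp_sub_left (fun x => H x * (α - x)) α]
    have e1 : α - (α + δ) = -δ := by ring
    have e2 : α - (α - δ) = δ := by ring
    rw [e1, e2]
  have step2 : (∫ x in (-δ)..δ, H x * (α - x))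
      = α * (∫ x in (-δ)..δ, H x) - ∫ x in (-δ)..δ, x * H x := by
    rw [intervalIntegral.integral_congr (g := fun x => α * H x - x * H x)
      (fun x _ => by ring)]
    rw [intervalIntegral.integral_sub (hIH.const_mul α) hIxH,
      intervalIntegral.integral_const_mul]
  have hodd : (∫ x in (-δ)..δ, x * H x) = 0 := by
    have h2 : ∀ x : ℝ, (-x) * H (-x) = -(x * H x) := by
      intro x
      have h3 : H (-x) = H x := by
        rw [hH]
        simp only
        rw [neg_div, omega_even, Real.cos_neg]
      rw [h3]
      ring
    have h1 : (∫ x in (-δ)..δ, (fun x => x * H x) (-x)) = ∫ x in (-δ)..δ, x * H x := by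
      rw [intervalIntegral.integral_comp_neg (fun x => x * H x)]
      norm_num
    have h3 : (∫ x in (-δ)..δ, (fun x => x * H x) (-x)) = -(∫ x in (-δ)..δ, x * H x) := by
      rw [intervalIntegral.integral_congr (g := fun x => -(x * H x)) (fun x _ => h2 x)]
      exact intervalIntegral.integral_neg
    linarith [h1.symm.trans h3]
  have hint : (∫ x in (-δ)..δ, H x) = c * (δ * eDel (2 * ε) δ) := by
    have h1 : ∀ x : ℝ, H x = c * (ω (2 * ε) (x / δ) / Real.cos x) :=
      fun x => mul_div_assoc _ _ _
    rw [intervalIntegral.integral_congr (g := fun x => c * (ω (2 * ε) (x / δ) / Real.cos x))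
      (fun x _ => h1 x), intervalIntegral.integral_const_mul]
    congr 1
    have h2 : ∀ x : ℝ, ω (2 * ε) (x / δ) / Real.cos x
        = (fun y => ω (2 * ε) y / Real.cos (δ * y)) (x / δ) := by
      intro x
      simp only
      have h4 : δ * (x / δ) = x := by field_simp
      rw [h4]
    rw [intervalIntegral.integral_congr (fun x _ => h2 x),
        intervalIntegral.integral_comp_div (fun y => ω (2 * ε) y / Real.cos (δ * y)) hδ0.ne']
    rw [neg_div, div_self hδ0.ne', smul_eq_mul]
    rw [eDel]
  rw [step1, step2, hodd, hint, sub_zero, hc]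
  have hne : δ * eDel (2 * ε) δ ≠ 0 := (mul_pos hδ0 he).ne'
  rw [one_div_mul_cancel hne, mul_one]
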